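/- Let G be an abelian group and let A be a nonempty finite subset of G. Then there exists a matching from A to itself if and only if 0 ∉ A. -/
import Mathlib

open Finset
open scoped Pointwise

/-- **Scherk's theorem**: if `0 ∈ A`, `0 ∈ B` and the only `x ∈ A` with `-x ∈ B` is `0`,
then `|A| + |B| ≤ |A + B| + 1`. Proved by induction on `|B|` via the Dyson transform. -/
private lemma scherk_aux {G : Type*} [AddCommGroup G] [DecidableEq G] :
    ∀ n (A B : Finset G), #B = n → 0 ∈ A → 0 ∈ B →
      (∀ x ∈ A, -x ∈ B → x = 0) → #A + #B ≤ #(A + B) + 1 := by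
  intro n
  induction n using Nat.strong_induction_on with
  | _ n ih =>
    intro A B hcard h0A h0B hrep
    by_cases hstable : ∀ a ∈ A, ∀ b ∈ B, a + b ∈ A
    · -- In this case `B = {0}`.
      have hb0 : ∀ b ∈ B, b = 0 := by
        intro b hb
        -- all `k • b ∈ A`
        have hsm : ∀ k : ℕ, (k • b : G) ∈ A := by
          intro k
          induction k with
          | zero => simpa using h0A
          | succ k ihk => rw [succ_nsmul]; exact hstable _ ihk _ hb
        -- pigeonhole
        obtain ⟨i, hi, j, hj, hne, hij⟩ :=
          Finset.exists_ne_map_eq_of_card_lt_of_maps_to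
            (s := Finset.range (#A + 1)) (t := A)
            (by simp) (fun k _ => hsm k)
        wlog hlt : i < j generalizing i j
        · exact this j hj i hi hne.symm hij.symm (by omega)
        have hd : (j - i) • b = 0 := by
          have : (j - i) • b + i • b = i • b := by
            rw [← add_nsmul]
            rw [Nat.sub_add_cancel hlt.le, hij]
          exact add_right_cancel (by rw [this, zero_add])
        have hd1 : j - i - 1 + 1 = j - i := by omega
        have hnb : -b = (j - i - 1) • b := by
          have h' : (j - i - 1) • b + b = 0 := by
            rw [← succ_nsmul, hd1, hd]
          exact neg_eq_of_add_eq_zero_left h'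
        have hnbA : -b ∈ A := by rw [hnb]; exact hsm _
        have := hrep _ hnbA (by simpa using hb)
        simpa [neg_eq_zero] using this
      have hB : B = {0} := by
        apply Finset.eq_singleton_iff_unique_mem.2 ⟨h0B, hb0⟩
      have hAsub : A ⊆ A + B := fun a ha => by
        rw [Finset.mem_add]; exact ⟨a, ha, 0, h0B, add_zero a⟩
      have hBc1 : #B = 1 := by rw [hB]; simp
      have := Finset.card_le_card hAsub
      omega
    · push_neg at hstable
      obtain ⟨a₀, ha₀, b₀, hb₀, hab₀⟩ := hstable
      set A₁ : Finset G := A ∪ (a₀ +ᵥ B) with hA₁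
      set B₁ : Finset G := B ∩ (-a₀ +ᵥ A) with hB₁
      have memv : ∀ (c x : G) (S : Finset G), x ∈ c +ᵥ S ↔ ∃ y ∈ S, c + y = x := by
        intro c x S; exact Finset.mem_vadd_finset
      -- cardinality identity
      have hBcard : #B₁ = #(A ∩ (a₀ +ᵥ B)) := by
        apply Finset.card_bij (fun x _ => a₀ + x)
        · intro x hx
          rw [hB₁, Finset.mem_inter] at hx
          obtain ⟨hxB, hxA⟩ := hx
          rw [memv] at hxA
          obtain ⟨y, hy, hxy⟩ := hxA
          have hxy' : a₀ + x = y := by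
            have : a₀ + (-a₀ + y) = a₀ + x := by rw [hxy]
            simpa using this.symm
          rw [Finset.mem_inter]
          refine ⟨by rw [hxy']; exact hy, ?_⟩
          rw [memv]; exact ⟨x, hxB, rfl⟩
        · intro x hx y hy hxy
          exact add_left_cancel hxy
        · intro y hy
          rw [Finset.mem_inter] at hy
          obtain ⟨hyA, hyB⟩ := hy
          rw [memv] at hyB
          obtain ⟨b, hb, hby⟩ := hyB
          refine ⟨b, ?_, hby⟩
          rw [hB₁, Finset.mem_inter]
          refine ⟨hb, ?_⟩
          rw [memv]
          exact ⟨y, hyA, by rw [← hby]; abel⟩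
      have hcards : #A₁ + #B₁ = #A + #B := by
        rw [hBcard, hA₁, Finset.card_union_add_card_inter, Finset.card_vadd_finset]
      -- sumset inclusion
      have hsub : A₁ + B₁ ⊆ A + B := by
        intro x hx
        rw [Finset.mem_add] at hx
        obtain ⟨u, hu, v, hv, huv⟩ := hx
        have hvB : v ∈ B := (Finset.mem_inter.1 hv).1
        have hvA : v ∈ -a₀ +ᵥ A := (Finset.mem_inter.1 hv).2
        rw [Finset.mem_union] at hu
        rcases hu with hu | hu
        · rw [Finset.mem_add]; exact ⟨u, hu, v, hvB, huv⟩
        · rw [memv] at hu hvA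
          obtain ⟨b', hb', hub⟩ := hu
          obtain ⟨a', ha', hva⟩ := hvA
          rw [Finset.mem_add]
          refine ⟨a', ha', b', hb', ?_⟩
          rw [← huv, ← hub, ← hva]; abel
      -- hypotheses for the recursive call
      have h0A₁ : (0 : G) ∈ A₁ := Finset.mem_union_left _ h0A
      have h0B₁ : (0 : G) ∈ B₁ := by
        rw [hB₁, Finset.mem_inter]
        exact ⟨h0B, by rw [memv]; exact ⟨a₀, ha₀, by abel⟩⟩
      have hrep₁ : ∀ x ∈ A₁, -x ∈ B₁ → x = 0 := by
        intro x hx hnx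
        have hnxB : -x ∈ B := (Finset.mem_inter.1 hnx).1
        rw [hA₁, Finset.mem_union] at hx
        rcases hx with hx | hx
        · exact hrep _ hx hnxB
        · rw [memv] at hx
          obtain ⟨b', hb', hxb⟩ := hx
          have hnb'A : -b' ∈ A := by
            have hnxA : -x ∈ -a₀ +ᵥ A := (Finset.mem_inter.1 hnx).2
            rw [memv] at hnxA
            obtain ⟨a', ha', hxa⟩ := hnxA
            have : a' = -b' := by
              have h1 : -a₀ + a' = -x := hxa
              have h2 : a₀ + b' = x := hxb
              apply add_left_cancel (a := -a₀)
              rw [h1, ← h2]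
              abel
            rwa [← this]
          have hb'0 : b' = 0 := by
            have := hrep _ hnb'A (by simpa using hb')
            simpa [neg_eq_zero] using this
          have hxa₀ : x = a₀ := by rw [← hxb, hb'0, add_zero]
          have := hrep a₀ ha₀ (by rw [← hxa₀]; exact hnxB)
          rw [hxa₀]; exact this
      -- strict decrease
      have hb₀not : b₀ ∉ B₁ := by
        rw [hB₁, Finset.mem_inter]
        rintro ⟨-, hmem⟩
        rw [memv] at hmem
        obtain ⟨a', ha', hab⟩ := hmem
        apply hab₀
        have : a₀ + b₀ = a' := by rw [← hab]; abel
        rw [this]; exact ha'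
      have hB₁lt : #B₁ < #B := by
        apply Finset.card_lt_card
        rw [Finset.ssubset_iff_of_subset (Finset.inter_subset_left)]
        exact ⟨b₀, hb₀, hb₀not⟩
      have hrec := ih #B₁ (by omega) A₁ B₁ rfl h0A₁ h0B₁ hrep₁
      have := Finset.card_le_card hsub
      omega

/-- The Hall-type inequality: if `0 ∉ A`, `S, T ⊆ A` are nonempty with `S + T ⊆ A`,
then `|S| + |T| ≤ |A|`. -/
private lemma hall_bound {G : Type*} [AddCommGroup G] [DecidableEq G]
    {A S T : Finset G} (h0 : (0 : G) ∉ A) (hSA : S ⊆ A) (hTA : T ⊆ A)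
    (hsum : ∀ s ∈ S, ∀ t ∈ T, s + t ∈ A) : #S + #T ≤ #A := by
  have h0S : (0 : G) ∉ S := fun h => h0 (hSA h)
  have h0T : (0 : G) ∉ T := fun h => h0 (hTA h)
  have hrep : ∀ x ∈ insert (0 : G) S, -x ∈ insert (0 : G) T → x = 0 := by
    intro x hx hnx
    rw [Finset.mem_insert] at hx hnx
    rcases hx with rfl | hx
    · rfl
    rcases hnx with hnx | hnx
    · simpa [neg_eq_zero] using hnx
    · exfalso
      have := hsum _ hx _ hnx
      rw [add_neg_cancel] at this
      exact h0 this
  have hsch := scherk_aux #(insert (0 : G) T) (insert 0 S) (insert 0 T) rfl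
    (Finset.mem_insert_self _ _) (Finset.mem_insert_self _ _) hrep
  have hsub : insert (0 : G) S + insert (0 : G) T ⊆ insert 0 A := by
    intro x hx
    rw [Finset.mem_add] at hx
    obtain ⟨u, hu, v, hv, huv⟩ := hx
    rw [Finset.mem_insert] at hu hv
    rw [Finset.mem_insert]
    rcases hu with rfl | hu <;> rcases hv with rfl | hv
    · left; rw [← huv, add_zero]
    · right; rw [← huv, zero_add]; exact hTA hv
    · right; rw [← huv, add_zero]; exact hSA hu
    · right; rw [← huv]; exact hsum _ hu _ hv
  have hc1 : #(insert (0 : G) S) = #S + 1 := Finset.card_insert_of_notMem h0S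
  have hc2 : #(insert (0 : G) T) = #T + 1 := Finset.card_insert_of_notMem h0T
  have hc3 : #(insert (0 : G) A) = #A + 1 := Finset.card_insert_of_notMem h0
  have := Finset.card_le_card hsub
  omega

/-- Theorem (Losonczy): a nonempty finite subset `A` of an abelian group `G` admits a
matching from `A` to itself (a bijection `f : A → A` with `a + f a ∉ A` for all
`a ∈ A`) if and only if `0 ∉ A`. -/
theorem self_matching_iff {G : Type*} [AddCommGroup G]
    (A : Finset G) (hA : A.Nonempty) :
    (∃ f : G → G, Set.BijOn f ↑A ↑A ∧ ∀ a ∈ A, a + f a ∉ A) ↔ (0 : G) ∉ A := by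
  classical
  constructor
  · rintro ⟨f, hbij, hf⟩ h0
    obtain ⟨a, ha, hfa⟩ := hbij.surjOn (show (0 : G) ∈ (A : Set G) from h0)
    have haA : a ∈ A := ha
    have := hf a haA
    rw [hfa, add_zero] at this
    exact this haA
  · intro h0
    -- Hall's marriage theorem setup
    set t : {x // x ∈ A} → Finset G := fun a => A.filter (fun b => (a : G) + b ∉ A) with ht
    have hall : ∀ s : Finset {x // x ∈ A}, #s ≤ #(s.biUnion t) := by
      intro s
      rcases s.eq_empty_or_nonempty with rfl | hs
      · simp
      set S : Finset G := s.image Subtype.val with hS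
      have hScard : #S = #s := Finset.card_image_of_injective _ Subtype.val_injective
      have hSA : S ⊆ A := by
        intro x hx
        rw [hS, Finset.mem_image] at hx
        obtain ⟨a, -, rfl⟩ := hx
        exact a.2
      set T : Finset G := A.filter (fun b => ∀ a ∈ S, a + b ∈ A) with hT
      -- s.biUnion t = A \ T
      have hbiU : s.biUnion t = A \ T := by
        ext b
        rw [Finset.mem_biUnion, Finset.mem_sdiff, hT, Finset.mem_filter]
        constructor
        · rintro ⟨a, has, hbt⟩
          rw [ht, Finset.mem_filter] at hbt
          refine ⟨hbt.1, fun h => hbt.2 (h.2 _ ?_)⟩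
          rw [hS, Finset.mem_image]
          exact ⟨a, has, rfl⟩
        · rintro ⟨hbA, hnot⟩
          have : ∃ a ∈ S, a + b ∉ A := by
            by_contra hcon
            push_neg at hcon
            exact hnot ⟨hbA, hcon⟩
          obtain ⟨a, haS, hab⟩ := this
          rw [hS, Finset.mem_image] at haS
          obtain ⟨a', ha's, rfl⟩ := haS
          exact ⟨a', ha's, by rw [ht, Finset.mem_filter]; exact ⟨hbA, hab⟩⟩
      have hTA : T ⊆ A := Finset.filter_subset _ _
      rcases T.eq_empty_or_nonempty with hTe | hTne
      · rw [hbiU, hTe, Finset.sdiff_empty, ← hScard]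
        exact Finset.card_le_card hSA
      · have hkey : #S + #T ≤ #A := by
          apply hall_bound h0 hSA hTA
          intro a haS b hbT
          rw [hT, Finset.mem_filter] at hbT
          exact hbT.2 _ haS
        have : #(A \ T) = #A - #T := Finset.card_sdiff_of_subset hTA
        rw [hbiU, this, ← hScard]
        have := Finset.card_le_card hTA
        omega
    obtain ⟨f₀, hf₀inj, hf₀mem⟩ :=
      (Finset.all_card_le_biUnion_card_iff_exists_injective t).1 hall
    -- assemble the global function
    set f : G → G := fun x => if hx : x ∈ A then f₀ ⟨x, hx⟩ else x with hf
    have hmapsto : ∀ a ∈ A, f a ∈ A := by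
      intro a ha
      rw [hf]
      simp only [ha, dif_pos]
      exact (Finset.mem_filter.1 (hf₀mem ⟨a, ha⟩)).1
    have havoid : ∀ a ∈ A, a + f a ∉ A := by
      intro a ha
      rw [hf]
      simp only [ha, dif_pos]
      exact (Finset.mem_filter.1 (hf₀mem ⟨a, ha⟩)).2
    have hinj : Set.InjOn f ↑A := by
      intro x hx y hy hxy
      have hx' : x ∈ A := hx
      have hy' : y ∈ A := hy
      rw [hf] at hxy
      simp only [hx', hy', dif_pos] at hxy
      have := hf₀inj hxy
      exact congrArg Subtype.val this
    have himg : A.image f = A := by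
      apply Finset.eq_of_subset_of_card_le
      · intro b hb
        rw [Finset.mem_image] at hb
        obtain ⟨a, ha, rfl⟩ := hb
        exact hmapsto a ha
      · rw [Finset.card_image_of_injOn (by simpa using hinj)]
    refine ⟨f, ⟨fun x hx => hmapsto x hx, hinj, ?_⟩, havoid⟩
    intro b hb
    have hb' : b ∈ A := hb
    rw [← himg] at hb'
    rw [Finset.mem_image] at hb'
    obtain ⟨a, ha, hab⟩ := hb'
    exact ⟨a, ha, hab⟩
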